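/- Let γ ≥ 1 be an integer and let α, β be integers with 0 ≤ α ≤ γ−1 and 0 ≤ β ≤ γ−1. Then, as an identity of rational numbers, Σ_{δ=0}^{min(α,β)} (2γ−2δ−1) · (2γ−α−δ−2)! · (2γ−β−δ−2)! / ((α−δ)! · (β−δ)!) = (2γ−α−1)! · (2γ−β−1)! / ((2γ−α−β−1) · α! · β!). -/

import Mathlib

open Finset Nat

private def Tq (k e f : ℕ) : ℚ :=
  ((f + k + 1).factorial : ℚ) * ((e + k + 1).factorial : ℚ) /
    (((k + 1 : ℕ) : ℚ) * (e.factorial : ℚ) * (f.factorial : ℚ))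

private def Sq (k e f : ℕ) : ℚ :=
  (((e + f + k + 1 : ℕ) : ℚ) * ((f + k).factorial : ℚ) * ((e + k).factorial : ℚ)) /
    ((e.factorial : ℚ) * (f.factorial : ℚ))

private lemma step_lemma (k e f : ℕ) :
    Sq k (e + 1) (f + 1) = Tq k (e + 1) (f + 1) - Tq k e f := by
  unfold Sq Tq
  have h1 : f + 1 + k + 1 = (f + k + 1) + 1 := by ring
  have h2 : e + 1 + k + 1 = (e + k + 1) + 1 := by ring
  have h3 : f + 1 + k = f + k + 1 := by ring
  have h4 : e + 1 + k = e + k + 1 := by ring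
  rw [h1, h2, h3, h4, Nat.factorial_succ (f + k + 1), Nat.factorial_succ (e + k + 1),
    Nat.factorial_succ e, Nat.factorial_succ f]
  have hk : ((k : ℚ) + 1) ≠ 0 := by positivity
  have he : ((e.factorial : ℚ)) ≠ 0 := by exact_mod_cast e.factorial_ne_zero
  have hf : ((f.factorial : ℚ)) ≠ 0 := by exact_mod_cast f.factorial_ne_zero
  push_cast
  field_simp
  ring

private lemma last₁ (k f : ℕ) : Sq k 0 f = Tq k 0 f := by
  unfold Sq Tq
  simp only [Nat.zero_add, Nat.factorial_zero]
  rw [Nat.factorial_succ (f + k), Nat.factorial_succ k]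
  have hk : ((k : ℚ) + 1) ≠ 0 := by positivity
  have hf : ((f.factorial : ℚ)) ≠ 0 := by exact_mod_cast f.factorial_ne_zero
  have hfk : (((f + k).factorial : ℚ)) ≠ 0 := by exact_mod_cast (f + k).factorial_ne_zero
  push_cast
  field_simp

private lemma last₂ (k e : ℕ) : Sq k e 0 = Tq k e 0 := by
  unfold Sq Tq
  simp only [Nat.zero_add, Nat.add_zero, Nat.factorial_zero]
  rw [Nat.factorial_succ (e + k), Nat.factorial_succ k]
  have hk : ((k : ℚ) + 1) ≠ 0 := by positivity
  have he : ((e.factorial : ℚ)) ≠ 0 := by exact_mod_cast e.factorial_ne_zero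
  have hek : (((e + k).factorial : ℚ)) ≠ 0 := by exact_mod_cast (e + k).factorial_ne_zero
  push_cast
  field_simp

theorem creative_telescoping_identity (γ α β : ℕ) (hγ : 1 ≤ γ)
    (hα : α ≤ γ - 1) (hβ : β ≤ γ - 1) :
    ∑ δ ∈ Finset.range (min α β + 1),
        (((2 * γ - 2 * δ - 1 : ℕ) : ℚ) * ((2 * γ - α - δ - 2).factorial : ℚ) *
            ((2 * γ - β - δ - 2).factorial : ℚ)) /
          (((α - δ).factorial : ℚ) * ((β - δ).factorial : ℚ))
      = (((2 * γ - α - 1).factorial : ℚ) * ((2 * γ - β - 1).factorial : ℚ)) /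
          (((2 * γ - α - β - 1 : ℕ) : ℚ) * (α.factorial : ℚ) * (β.factorial : ℚ)) := by
  have hαγ : α + 1 ≤ γ := by omega
  have hβγ : β + 1 ≤ γ := by omega
  set k := 2 * γ - α - β - 2 with hk
  have hterm : ∀ δ ∈ Finset.range (min α β + 1),
      (((2 * γ - 2 * δ - 1 : ℕ) : ℚ) * ((2 * γ - α - δ - 2).factorial : ℚ) *
            ((2 * γ - β - δ - 2).factorial : ℚ)) /
          (((α - δ).factorial : ℚ) * ((β - δ).factorial : ℚ))
        = Sq k (α - δ) (β - δ) := by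
    intro δ hδ
    simp only [Finset.mem_range] at hδ
    have e1 : 2 * γ - 2 * δ - 1 = (α - δ) + (β - δ) + k + 1 := by omega
    have e2 : 2 * γ - α - δ - 2 = (β - δ) + k := by omega
    have e3 : 2 * γ - β - δ - 2 = (α - δ) + k := by omega
    rw [e1, e2, e3]
    rfl
  rw [Finset.sum_congr rfl hterm, Finset.sum_range_succ]
  have hmid : ∀ δ ∈ Finset.range (min α β),
      Sq k (α - δ) (β - δ)
        = Tq k (α - δ) (β - δ) - Tq k (α - (δ + 1)) (β - (δ + 1)) := by
    intro δ hδ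
    simp only [Finset.mem_range] at hδ
    have e1 : α - δ = (α - (δ + 1)) + 1 := by omega
    have e2 : β - δ = (β - (δ + 1)) + 1 := by omega
    rw [e1, e2, step_lemma]
  rw [Finset.sum_congr rfl hmid,
    Finset.sum_range_sub' (fun δ => Tq k (α - δ) (β - δ))]
  have hlast : Sq k (α - min α β) (β - min α β) = Tq k (α - min α β) (β - min α β) := by
    rcases Nat.le_total α β with h | h
    · rw [min_eq_left h, Nat.sub_self]; exact last₁ k (β - α)
    · rw [min_eq_right h, Nat.sub_self]; exact last₂ k (α - β)
  rw [hlast, sub_add_cancel]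
  have e1 : 2 * γ - α - 1 = β + k + 1 := by omega
  have e2 : 2 * γ - β - 1 = α + k + 1 := by omega
  have e3 : 2 * γ - α - β - 1 = k + 1 := by omega
  rw [e1, e2, e3]
  unfold Tq
  rw [Nat.sub_zero, Nat.sub_zero]
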